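/- Let 0 < κ_* ≤ κ^* < 1 and let A be a real symmetric d×d matrix with κ_*‖ξ‖² ≤ ξᵀAξ ≤ κ^*‖ξ‖² for all ξ ∈ ℝ^d, and set P := (A⁻¹ − I)⁻¹. Then for all ξ, η ∈ ℝ^d: ξᵀPξ + 2ηᵀPξ + ηᵀ(I + P)η ≥ (1 − κ^*)‖η‖² + (κ_*(1−κ^*)/((1−κ_*)(2−κ^*)))‖ξ‖². -/

import Mathlib

open Matrix

lemma dot_eq_inner {d : ℕ} (u : EuclideanSpace ℝ (Fin d)) (a : Fin d → ℝ) :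
    (⇑u) ⬝ᵥ a = inner ℝ u ((WithLp.equiv 2 _).symm a) := by
  simp only [dotProduct, PiLp.inner_apply, RCLike.inner_apply, WithLp.equiv, Equiv.refl_apply,
    starRingEnd_apply, star_trivial]
  exact Finset.sum_congr rfl fun x _ => mul_comm _ _

lemma euc_sum_coe {d : ℕ} (f : Fin d → EuclideanSpace ℝ (Fin d)) :
    ⇑(∑ i, f i) = ∑ i, ⇑(f i) :=
  map_sum (WithLp.linearEquiv 2 ℝ (Fin d → ℝ)) f Finset.univ

lemma dot_sum {d : ℕ} (a : Fin d → ℝ) (g : Fin d → Fin d → ℝ) :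
    a ⬝ᵥ (∑ i, g i) = ∑ i, a ⬝ᵥ g i := by
  simp only [dotProduct, Finset.sum_apply, Finset.mul_sum]
  exact Finset.sum_comm

lemma keylem {d : ℕ} (M : Matrix (Fin d) (Fin d) ℝ)
    (v : OrthonormalBasis (Fin d) ℝ (EuclideanSpace ℝ (Fin d))) (μ : Fin d → ℝ)
    (hM : ∀ i, M *ᵥ ⇑(v i) = μ i • ⇑(v i)) (a b : Fin d → ℝ) :
    a ⬝ᵥ (M *ᵥ b) = ∑ i, μ i * ((⇑(v i) ⬝ᵥ a) * (⇑(v i) ⬝ᵥ b)) := by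
  have hb : b = ∑ i, (⇑(v i) ⬝ᵥ b) • ⇑(v i) := by
    have h := v.sum_repr' ((WithLp.equiv 2 (Fin d → ℝ)).symm b)
    calc b = ⇑((WithLp.equiv 2 (Fin d → ℝ)).symm b) := rfl
    _ = ⇑(∑ i, (inner ℝ (v i) ((WithLp.equiv 2 _).symm b) : ℝ) • v i) := by rw [h]
    _ = ∑ i, (⇑(v i) ⬝ᵥ b) • ⇑(v i) := by
        rw [euc_sum_coe]
        refine Finset.sum_congr rfl fun i _ => ?_
        rw [dot_eq_inner]
        rfl
  conv_lhs => rw [hb]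
  have hmv : M *ᵥ (∑ i, (⇑(v i) ⬝ᵥ b) • ⇑(v i)) = ∑ i, ((⇑(v i) ⬝ᵥ b) * μ i) • ⇑(v i) := by
    rw [← M.mulVecLin_apply, map_sum]
    refine Finset.sum_congr rfl fun i _ => ?_
    rw [_root_.map_smul, mulVecLin_apply, hM i, smul_smul]
  rw [hmv, dot_sum]
  refine Finset.sum_congr rfl fun i _ => ?_
  rw [dotProduct_smul, smul_eq_mul, dotProduct_comm a]
  ring

lemma scalar_ineq (κs κt l x y : ℝ) (hκs : 0 < κs) (hκst : κs ≤ κt) (hκt : κt < 1)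
    (h1 : κs ≤ l) (h2 : l ≤ κt) :
    (1 - κt) * (y * y) + κs * (1 - κt) / ((1 - κs) * (2 - κt)) * (x * x) ≤
      l / (1 - l) * (x * x) + 2 * (l / (1 - l) * (y * x)) + (1 + l / (1 - l)) * (y * y) := by
  have hl0 : 0 < l := lt_of_lt_of_le hκs h1
  have hl1 : 0 < 1 - l := by linarith
  have hs1 : 0 < 1 - κs := by linarith
  have ht2 : 0 < 2 - κt := by linarith
  have ht1 : 0 < 1 - κt := by linarith
  have hκt0 : 0 < κt := lt_of_lt_of_le hκs hκst
  set p := l / (1 - l) with hp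
  set c := κs * (1 - κt) / ((1 - κs) * (2 - κt)) with hc
  have hp0 : 0 < p := by positivity
  have hpc : 0 < p + κt := by positivity
  have key : 0 ≤ κt * l * (1 - κs) * (2 - κt) - κs * (1 - κt) * (l + κt * (1 - l)) := by
    nlinarith [mul_nonneg (sub_nonneg.2 h1) (mul_pos ht1 ht1).le,
      mul_nonneg (sub_nonneg.2 hκst) (mul_pos hs1 hs1).le,
      mul_nonneg hκs.le (mul_pos hs1 hs1).le, mul_pos hκs hκt0,
      mul_nonneg (mul_nonneg hκs.le (sub_nonneg.2 hκst)) (sub_nonneg.2 h1),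
      mul_nonneg (mul_nonneg hκt0.le (sub_nonneg.2 h1)) hs1.le]
  have hdisc : 0 ≤ κt * p - c * (p + κt) := by
    have e1 : κt * p - c * (p + κt) =
        (κt * l * (1 - κs) * (2 - κt) - κs * (1 - κt) * (l + κt * (1 - l))) /
          ((1 - l) * ((1 - κs) * (2 - κt))) := by
      rw [hp, hc]; field_simp
    rw [e1]
    exact div_nonneg key (by positivity)
  nlinarith [sq_nonneg ((p + κt) * y + p * x), mul_nonneg hdisc (sq_nonneg x), hpc,
    mul_pos hpc hpc]

theorem stmt_7 {d : ℕ} (κs κt : ℝ) (hκs : 0 < κs) (hκst : κs ≤ κt) (hκt : κt < 1)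
    (A : Matrix (Fin d) (Fin d) ℝ) (hAsymm : A.IsSymm)
    (hbound : ∀ ξ : Fin d → ℝ,
      κs * (ξ ⬝ᵥ ξ) ≤ ξ ⬝ᵥ (A *ᵥ ξ) ∧ ξ ⬝ᵥ (A *ᵥ ξ) ≤ κt * (ξ ⬝ᵥ ξ)) :
    ∀ ξ η : Fin d → ℝ,
      ξ ⬝ᵥ ((A⁻¹ - 1)⁻¹ *ᵥ ξ) + 2 * (η ⬝ᵥ ((A⁻¹ - 1)⁻¹ *ᵥ ξ)) +
          η ⬝ᵥ ((1 + (A⁻¹ - 1)⁻¹) *ᵥ η) ≥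
        (1 - κt) * (η ⬝ᵥ η) + κs * (1 - κt) / ((1 - κs) * (2 - κt)) * (ξ ⬝ᵥ ξ) := by
  intro ξ η
  have hA : A.IsHermitian := by
    rw [Matrix.IsHermitian, conjTranspose_eq_transpose_of_trivial]
    exact hAsymm
  set v := hA.eigenvectorBasis with hv
  set L := hA.eigenvalues with hL
  have hAv : ∀ i, A *ᵥ ⇑(v i) = L i • ⇑(v i) := fun i => hA.mulVec_eigenvectorBasis i
  -- dot product of eigenvectors with themselves is 1
  have hnorm : ∀ i, ⇑(v i) ⬝ᵥ ⇑(v i) = 1 := by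
    intro i
    rw [dot_eq_inner]
    have h1 : (WithLp.equiv 2 (Fin d → ℝ)).symm ⇑(v i) = v i := rfl
    rw [h1, real_inner_self_eq_norm_mul_norm, v.orthonormal.1 i, one_mul]
  -- eigenvalue bounds
  have hLb : ∀ i, κs ≤ L i ∧ L i ≤ κt := by
    intro i
    have h := hbound ⇑(v i)
    rw [hAv i, dotProduct_smul, smul_eq_mul, hnorm i, mul_one] at h
    constructor <;> linarith [h.1, h.2]
  have hL0 : ∀ i, 0 < L i := fun i => lt_of_lt_of_le hκs (hLb i).1
  have hL1 : ∀ i, L i < 1 := fun i => lt_of_le_of_lt (hLb i).2 hκt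
  -- positive definiteness
  have hxx : ∀ x : Fin d → ℝ, x ≠ 0 → 0 < x ⬝ᵥ x := by
    intro x hx
    have h0 : 0 ≤ x ⬝ᵥ x := Finset.sum_nonneg fun i _ => mul_self_nonneg (x i)
    rcases h0.lt_or_eq with h | h
    · exact h
    · exact absurd ((dotProduct_self_eq_zero).1 h.symm) hx
  have hApd : A.PosDef := by
    refine PosDef.of_dotProduct_mulVec_pos hA fun x hx => ?_
    have h := (hbound x).1
    have := hxx x hx
    calc (0:ℝ) < κs * (x ⬝ᵥ x) := by positivity
    _ ≤ x ⬝ᵥ (A *ᵥ x) := h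
    _ = star x ⬝ᵥ (A *ᵥ x) := by rw [star_trivial]
  have hBpd : (1 - A).PosDef := by
    refine PosDef.of_dotProduct_mulVec_pos ?_ fun x hx => ?_
    · rw [Matrix.IsHermitian, conjTranspose_sub, hA, conjTranspose_one]
    · have h := (hbound x).2
      have := hxx x hx
      have e : star x ⬝ᵥ ((1 - A) *ᵥ x) = x ⬝ᵥ x - x ⬝ᵥ (A *ᵥ x) := by
        rw [star_trivial, sub_mulVec, one_mulVec, dotProduct_sub]
      rw [e]
      nlinarith
  have hAdet : IsUnit A.det := hApd.det_pos.ne'.isUnit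
  have hBdet : IsUnit (1 - A).det := hBpd.det_pos.ne'.isUnit
  have hNfact : A⁻¹ - 1 = A⁻¹ * (1 - A) := by
    rw [mul_sub, mul_one, nonsing_inv_mul A hAdet]
  have hNdet : IsUnit (A⁻¹ - 1).det := by
    rw [hNfact, det_mul]
    exact ((A.isUnit_nonsing_inv_det hAdet)).mul hBdet
  have hNN : (A⁻¹ - 1)⁻¹ * (A⁻¹ - 1) = 1 := nonsing_inv_mul _ hNdet
  -- eigenvector action of A⁻¹
  have hAinv_v : ∀ i, A⁻¹ *ᵥ ⇑(v i) = (L i)⁻¹ • ⇑(v i) := by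
    intro i
    have h1 : A⁻¹ *ᵥ (A *ᵥ ⇑(v i)) = ⇑(v i) := by
      rw [mulVec_mulVec, nonsing_inv_mul A hAdet, one_mulVec]
    rw [hAv i, mulVec_smul] at h1
    have h3 : (L i)⁻¹ • (L i • (A⁻¹ *ᵥ ⇑(v i))) = (L i)⁻¹ • ⇑(v i) := by rw [h1]
    rwa [smul_smul, inv_mul_cancel₀ (hL0 i).ne', one_smul] at h3
  have hNv : ∀ i, (A⁻¹ - 1) *ᵥ ⇑(v i) = ((L i)⁻¹ - 1) • ⇑(v i) := by
    intro i
    rw [sub_mulVec, one_mulVec, hAinv_v i, sub_smul, one_smul]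
  have hPv : ∀ i, (A⁻¹ - 1)⁻¹ *ᵥ ⇑(v i) = (L i / (1 - L i)) • ⇑(v i) := by
    intro i
    have h2 : (A⁻¹ - 1)⁻¹ *ᵥ ((A⁻¹ - 1) *ᵥ ⇑(v i)) = ⇑(v i) := by
      rw [mulVec_mulVec, hNN, one_mulVec]
    rw [hNv i, mulVec_smul] at h2
    have hc : (L i)⁻¹ - 1 ≠ 0 := by
      have : 1 < (L i)⁻¹ := (one_lt_inv₀ (hL0 i)).2 (hL1 i)
      linarith
    have hcinv : ((L i)⁻¹ - 1)⁻¹ = L i / (1 - L i) := by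
      rw [show (L i)⁻¹ - 1 = (1 - L i) / L i from by rw [eq_div_iff (hL0 i).ne', sub_mul, inv_mul_cancel₀ (hL0 i).ne', one_mul], inv_div]
    have h3 : ((L i)⁻¹ - 1)⁻¹ • (((L i)⁻¹ - 1) • ((A⁻¹ - 1)⁻¹ *ᵥ ⇑(v i))) =
        ((L i)⁻¹ - 1)⁻¹ • ⇑(v i) := by rw [h2]
    rwa [smul_smul, inv_mul_cancel₀ hc, one_smul, hcinv] at h3
  have hQv : ∀ i, (1 + (A⁻¹ - 1)⁻¹) *ᵥ ⇑(v i) = (1 + L i / (1 - L i)) • ⇑(v i) := by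
    intro i
    rw [add_mulVec, one_mulVec, hPv i, add_smul, one_smul]
  have hIv : ∀ i, (1 : Matrix (Fin d) (Fin d) ℝ) *ᵥ ⇑(v i) = (fun _ => (1:ℝ)) i • ⇑(v i) := by
    intro i
    rw [one_mulVec, one_smul]
  -- expand all quadratic forms
  have e1 := keylem ((A⁻¹ - 1)⁻¹) v (fun i => L i / (1 - L i)) hPv ξ ξ
  have e2 := keylem ((A⁻¹ - 1)⁻¹) v (fun i => L i / (1 - L i)) hPv η ξ
  have e3 := keylem (1 + (A⁻¹ - 1)⁻¹) v (fun i => 1 + L i / (1 - L i)) hQv η η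
  have e4 : ξ ⬝ᵥ ξ = ∑ i, (⇑(v i) ⬝ᵥ ξ) * (⇑(v i) ⬝ᵥ ξ) := by
    have := keylem 1 v (fun _ => (1:ℝ)) hIv ξ ξ
    rw [one_mulVec] at this
    simpa using this
  have e5 : η ⬝ᵥ η = ∑ i, (⇑(v i) ⬝ᵥ η) * (⇑(v i) ⬝ᵥ η) := by
    have := keylem 1 v (fun _ => (1:ℝ)) hIv η η
    rw [one_mulVec] at this
    simpa using this
  rw [ge_iff_le, e1, e2, e3, e4, e5, Finset.mul_sum, Finset.mul_sum, Finset.mul_sum,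
    ← Finset.sum_add_distrib, ← Finset.sum_add_distrib, ← Finset.sum_add_distrib]
  refine Finset.sum_le_sum fun i _ => ?_
  exact scalar_ineq κs κt (L i) (⇑(v i) ⬝ᵥ ξ) (⇑(v i) ⬝ᵥ η) hκs hκst hκt (hLb i).1 (hLb i).2
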